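/- Let n ≥ 1 and d ≥ 1 be integers. In ℝ^n with standard basis e_1, …, e_n, let Δ = conv{0, e_1, …, e_{n−1}, d·e_n} and, for i = 1, …, d, let Δ_i = conv{e_1, …, e_{n−1}, (i−1)·e_n, i·e_n}. Then Δ = Δ_1 ∪ Δ_2 ∪ ⋯ ∪ Δ_d. -/

import Mathlib

/-- The first `n−1` standard basis vectors `e_1, …, e_{n−1}` of `ℝⁿ`. -/
def smallBasis (n : ℕ) : Set (Fin n → ℝ) :=
  {v | ∃ i : Fin n, (i : ℕ) + 1 < n ∧ v = Pi.single i 1}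

/-- The last index of `Fin n` (for `n ≥ 1`), so `e_n = (Pi.single (lastIdx n hn) 1 : Fin n → ℝ)`. -/
def lastIdx (n : ℕ) (hn : 1 ≤ n) : Fin n := ⟨n - 1, by omega⟩

/-- The simplex `Δ = conv{0, e_1, …, e_{n−1}, d·e_n}` in `ℝⁿ`. -/
def bigSimplex (n : ℕ) (hn : 1 ≤ n) (d : ℕ) : Set (Fin n → ℝ) :=
  convexHull ℝ (insert (0 : Fin n → ℝ)
    (insert ((d : ℝ) • (Pi.single (lastIdx n hn) 1 : Fin n → ℝ)) (smallBasis n)))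

/-- The simplex `Δ_i = conv{e_1, …, e_{n−1}, (i−1)·e_n, i·e_n}` in `ℝⁿ`. -/
def sliceSimplex (n : ℕ) (hn : 1 ≤ n) (i : ℕ) : Set (Fin n → ℝ) :=
  convexHull ℝ (insert (((i : ℝ) - 1) • (Pi.single (lastIdx n hn) 1 : Fin n → ℝ))
    (insert ((i : ℝ) • (Pi.single (lastIdx n hn) 1 : Fin n → ℝ)) (smallBasis n)))

section Helpers

variable (n : ℕ) (hn : 1 ≤ n)

/-- Sum of all coordinates except the last. -/
noncomputable def rsum (x : Fin n → ℝ) : ℝ :=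
  ∑ j ∈ Finset.univ.erase (lastIdx n hn), x j

lemma smul_single (a : ℝ) (i : Fin n) :
    a • (Pi.single i (1:ℝ) : Fin n → ℝ) = Pi.single i a := by
  funext k; by_cases h : k = i <;> simp [Pi.single_apply, h]

lemma rsum_single_ne {j : Fin n} (hj : j ≠ lastIdx n hn) (c : ℝ) :
    rsum n hn (Pi.single j c) = c := by
  simp [rsum, Pi.single_apply, Finset.sum_ite_eq', hj]

lemma rsum_single_last (c : ℝ) :
    rsum n hn (Pi.single (lastIdx n hn) c) = c * 0 := by
  simp [rsum, Pi.single_apply, Finset.sum_ite_eq']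

lemma rsum_zero : rsum n hn (0 : Fin n → ℝ) = 0 := by
  simp [rsum]

lemma rsum_comb (a b : ℝ) (x y : Fin n → ℝ) :
    rsum n hn (a • x + b • y) = a * rsum n hn x + b * rsum n hn y := by
  simp only [rsum, Pi.add_apply, Pi.smul_apply, smul_eq_mul, Finset.sum_add_distrib,
    Finset.mul_sum]

lemma ne_last_of_small {j : Fin n} (hj : (j : ℕ) + 1 < n) : j ≠ lastIdx n hn := by
  intro h
  have : (j : ℕ) = n - 1 := congrArg Fin.val h
  omega

lemma small_lt {j : Fin n} (hj : j ≠ lastIdx n hn) : (j : ℕ) + 1 < n := by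
  have h1 : (j : ℕ) < n := j.isLt
  have h2 : (j : ℕ) ≠ n - 1 := fun h => hj (Fin.ext (by simpa [lastIdx] using h))
  omega

/-- Membership characterization of the big simplex. -/
lemma mem_bigSimplex_iff (d : ℕ) (hd : 1 ≤ d) (x : Fin n → ℝ) :
    x ∈ bigSimplex n hn d ↔
      (∀ j, 0 ≤ x j) ∧ rsum n hn x + x (lastIdx n hn) / d ≤ 1 := by
  set L := lastIdx n hn with hL
  have hd0 : (0:ℝ) < d := by exact_mod_cast hd
  constructor
  · intro hx
    have key : bigSimplex n hn d ⊆
        {y : Fin n → ℝ | (∀ j, 0 ≤ y j) ∧ rsum n hn y + y L / d ≤ 1} := by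
      rw [bigSimplex]
      refine convexHull_min ?_ ?_
      · intro v hv
        simp only [Set.mem_insert_iff, smallBasis, Set.mem_setOf_eq] at hv
        obtain rfl | rfl | ⟨j, hj, rfl⟩ := hv
        · refine ⟨fun j => le_rfl, ?_⟩
          simp [rsum_zero]
        · rw [smul_single]
          refine ⟨?_, ?_⟩
          · intro j; by_cases h : j = L <;> simp [Pi.single_apply, ← hL, h, hd0.le]
          · rw [← hL, rsum_single_last]
            simp [hd0.ne']
        · have hjL := ne_last_of_small n hn hj
          refine ⟨?_, ?_⟩
          · intro k; by_cases h : k = j <;> simp [Pi.single_apply, h]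
          · rw [rsum_single_ne n hn hjL]
            simp [Pi.single_apply, hL, Ne.symm hjL]
      · intro x hx y hy a b ha hb hab
        refine ⟨?_, ?_⟩
        · intro j
          have := hx.1 j
          have := hy.1 j
          simp only [Pi.add_apply, Pi.smul_apply, smul_eq_mul]
          nlinarith
        · show rsum n hn _ + _ ≤ _
          rw [rsum_comb]
          simp only [Pi.add_apply, Pi.smul_apply, smul_eq_mul]
          have h1 := hx.2
          have h2 := hy.2
          have e1 : (a * x L + b * y L) / d = a * (x L / d) + b * (y L / d) := by ring
          rw [e1]
          nlinarith
    exact key hx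
  · rintro ⟨h0, hs⟩
    classical
    set w : Option (Fin n) → ℝ :=
      fun o => o.elim (1 - (rsum n hn x + x L / d))
        (fun j => if j = L then x L / d else x j) with hw
    set z : Option (Fin n) → (Fin n → ℝ) :=
      fun o => o.elim 0
        (fun j => if j = L then (d : ℝ) • (Pi.single L (1:ℝ) : Fin n → ℝ)
          else Pi.single j 1) with hz
    have hsum : ∑ j : Fin n, w (some j) = rsum n hn x + x L / d := by
      rw [← Finset.sum_erase_add _ _ (Finset.mem_univ L)]
      congr 1
      · exact Finset.sum_congr rfl fun j hj => by
          simp [hw, hL, Finset.ne_of_mem_erase hj]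
      · simp [hw]
    have hwsum : ∑ o : Option (Fin n), w o = 1 := by
      rw [Fintype.sum_option, hsum]; simp [hw]
    have hxeq : ∑ o : Option (Fin n), w o • z o = x := by
      rw [Fintype.sum_option]
      have : ∀ j : Fin n, w (some j) • z (some j) = Pi.single j (x j) := by
        intro j
        by_cases h : j = L
        · simp only [hw, hz, Option.elim]
          rw [if_pos h, if_pos h, h, smul_smul, smul_single]
          field_simp
        · simp [hw, hz, h, smul_single]
      simp only [this]
      simp [hw, hz, Finset.univ_sum_single]
    rw [← hxeq]
    refine Convex.sum_mem (convex_convexHull ℝ _) ?_ hwsum ?_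
    · rintro (_ | j) _
      · simpa [hw] using hs
      · simp only [hw, Option.elim]
        by_cases h : j = L
        · rw [if_pos h]
          exact div_nonneg (h0 L) hd0.le
        · rw [if_neg h]
          exact h0 j
    · rintro (_ | j) _
      · exact subset_convexHull ℝ _ (by simp [hz])
      · by_cases h : j = L
        · refine subset_convexHull ℝ _ ?_
          simp [hz, h, hL]
        · refine subset_convexHull ℝ _ ?_
          simp only [hz, Option.elim, if_neg h]
          exact Or.inr (Or.inr ⟨j, small_lt n hn h, rfl⟩)

/-- Membership characterization of the slice simplex. -/
lemma mem_sliceSimplex_iff (i : ℕ) (hi : 1 ≤ i) (x : Fin n → ℝ) :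
    x ∈ sliceSimplex n hn i ↔
      (∀ j, j ≠ lastIdx n hn → 0 ≤ x j) ∧ rsum n hn x ≤ 1 ∧
        ((i : ℝ) - 1) * (1 - rsum n hn x) ≤ x (lastIdx n hn) ∧
        x (lastIdx n hn) ≤ (i : ℝ) * (1 - rsum n hn x) := by
  set L := lastIdx n hn with hL
  have hi0 : (1:ℝ) ≤ i := by exact_mod_cast hi
  constructor
  · intro hx
    have key : sliceSimplex n hn i ⊆
        {y : Fin n → ℝ | (∀ j, j ≠ L → 0 ≤ y j) ∧ rsum n hn y ≤ 1 ∧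
          ((i : ℝ) - 1) * (1 - rsum n hn y) ≤ y L ∧
          y L ≤ (i : ℝ) * (1 - rsum n hn y)} := by
      rw [sliceSimplex]
      refine convexHull_min ?_ ?_
      · intro v hv
        simp only [Set.mem_insert_iff, smallBasis, Set.mem_setOf_eq] at hv
        obtain rfl | rfl | ⟨j, hj, rfl⟩ := hv
        · rw [smul_single, ← hL]
          refine ⟨?_, ?_, ?_, ?_⟩
          · intro k hk; simp [Pi.single_apply, hk]
          · rw [rsum_single_last]; norm_num
          · rw [rsum_single_last]; simp
          · rw [rsum_single_last]; simp
        · rw [smul_single, ← hL]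
          refine ⟨?_, ?_, ?_, ?_⟩
          · intro k hk; simp [Pi.single_apply, hk]
          · rw [rsum_single_last]; norm_num
          · rw [rsum_single_last]; simp
          · rw [rsum_single_last]; simp
        · have hjL := ne_last_of_small n hn hj
          refine ⟨?_, ?_, ?_, ?_⟩
          · intro k _; by_cases h : k = j <;> simp [Pi.single_apply, h]
          · rw [rsum_single_ne n hn hjL]
          · rw [rsum_single_ne n hn hjL]
            simp [Pi.single_apply, hL, Ne.symm hjL]
          · rw [rsum_single_ne n hn hjL]
            simp [Pi.single_apply, hL, Ne.symm hjL]
      · intro x hx y hy a b ha hb hab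
        obtain ⟨hx1, hx2, hx3, hx4⟩ := hx
        obtain ⟨hy1, hy2, hy3, hy4⟩ := hy
        have hs : rsum n hn (a • x + b • y) = a * rsum n hn x + b * rsum n hn y :=
          rsum_comb n hn a b x y
        refine ⟨?_, ?_, ?_, ?_⟩
        · intro j hj
          have := hx1 j hj
          have := hy1 j hj
          simp only [Pi.add_apply, Pi.smul_apply, smul_eq_mul]
          nlinarith
        · show rsum n hn _ ≤ _
          rw [hs]; nlinarith
        · show _ ≤ (a • x + b • y) L
          rw [hs]
          simp only [Pi.add_apply, Pi.smul_apply, smul_eq_mul]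
          nlinarith
        · show (a • x + b • y) L ≤ _
          rw [hs]
          simp only [Pi.add_apply, Pi.smul_apply, smul_eq_mul]
          nlinarith
    exact key hx
  · rintro ⟨h0, hs1, hlo, hhi⟩
    classical
    set s : ℝ := rsum n hn x with hsdef
    set bb : ℝ := (i : ℝ) * (1 - s) - x L with hbb
    set cc : ℝ := x L - ((i : ℝ) - 1) * (1 - s) with hcc
    have hbb0 : 0 ≤ bb := by rw [hbb]; linarith
    have hcc0 : 0 ≤ cc := by rw [hcc]; linarith
    set w : Option (Fin n) → ℝ :=
      fun o => o.elim bb (fun j => if j = L then cc else x j) with hw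
    set z : Option (Fin n) → (Fin n → ℝ) :=
      fun o => o.elim (((i : ℝ) - 1) • (Pi.single L (1:ℝ) : Fin n → ℝ))
        (fun j => if j = L then (i : ℝ) • (Pi.single L (1:ℝ) : Fin n → ℝ)
          else Pi.single j 1) with hz
    have hsum : ∑ j : Fin n, w (some j) = s + cc := by
      rw [← Finset.sum_erase_add _ _ (Finset.mem_univ L)]
      congr 1
      · exact Finset.sum_congr rfl fun j hj => by
          simp [hw, hL, Finset.ne_of_mem_erase hj]
      · simp [hw]
    have hwsum : ∑ o : Option (Fin n), w o = 1 := by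
      rw [Fintype.sum_option, hsum, hw]
      simp only [Option.elim]
      rw [hbb, hcc]; ring
    have hxeq : ∑ o : Option (Fin n), w o • z o = x := by
      rw [Fintype.sum_option]
      have hnone : w none • z none = Pi.single L (bb * ((i:ℝ) - 1)) := by
        simp only [hw, hz, Option.elim]
        rw [smul_smul, smul_single]
      have hsome : ∀ j : Fin n, j ≠ L →
          w (some j) • z (some j) = Pi.single j (x j) := by
        intro j h
        simp [hw, hz, h, smul_single]
      have hlast : w (some L) • z (some L) = Pi.single L (cc * (i:ℝ)) := by
        simp only [hw, hz, Option.elim, if_true]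
        rw [smul_smul, smul_single]
      rw [← Finset.sum_erase_add _ _ (Finset.mem_univ L), hlast,
        Finset.sum_congr rfl (fun j hj => hsome j (Finset.ne_of_mem_erase hj)), hnone]
      have hcomb : bb * ((i:ℝ) - 1) + cc * (i:ℝ) = x L := by
        rw [hbb, hcc]; ring
      rw [add_comm (∑ _ ∈ _, _) _, ← add_assoc, ← Pi.single_add, hcomb]
      rw [add_comm, Finset.sum_erase_add _ _ (Finset.mem_univ L)]
      exact Finset.univ_sum_single x
    rw [← hxeq]
    refine Convex.sum_mem (convex_convexHull ℝ _) ?_ hwsum ?_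
    · rintro (_ | j) _
      · exact hbb0
      · simp only [hw, Option.elim]
        by_cases h : j = L
        · rw [if_pos h]; exact hcc0
        · rw [if_neg h]; exact h0 j h
    · rintro (_ | j) _
      · exact subset_convexHull ℝ _ (by simp [hz, sliceSimplex, hL])
      · by_cases h : j = L
        · refine subset_convexHull ℝ _ ?_
          simp [hz, h, hL]
        · refine subset_convexHull ℝ _ ?_
          simp only [hz, Option.elim, if_neg h]
          exact Or.inr (Or.inr ⟨j, small_lt n hn h, rfl⟩)

end Helpers

/-- `Δ = conv{0, e_1, …, e_{n−1}, d·e_n}` is the union of the `d`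
simplices `Δ_i = conv{e_1, …, e_{n−1}, (i−1)·e_n, i·e_n}`, `i = 1, …, d`. -/
theorem stmt8 (n d : ℕ) (hn : 1 ≤ n) (hd : 1 ≤ d) :
    bigSimplex n hn d = ⋃ i ∈ Set.Icc 1 d, sliceSimplex n hn i := by
  ext x
  set L := lastIdx n hn with hL
  have hd0 : (0:ℝ) < d := by exact_mod_cast hd
  rw [mem_bigSimplex_iff n hn d hd x]
  simp only [Set.mem_iUnion, Set.mem_Icc]
  constructor
  · rintro ⟨h0, hsum⟩
    set s : ℝ := rsum n hn x with hsdef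
    have hl0 : 0 ≤ x L := h0 L
    have hld : x L ≤ d * (1 - s) := by
      have : x L / d ≤ 1 - s := by linarith
      calc x L = (x L / d) * d := by field_simp
      _ ≤ (1 - s) * d := by nlinarith
      _ = d * (1 - s) := by ring
    have hs1 : s ≤ 1 := by
      have : 0 ≤ x L / d := div_nonneg hl0 hd0.le
      linarith
    by_cases hcase : 1 - s ≤ 0
    · have hseq : s = 1 := by linarith
      have hxl : x L = 0 := by nlinarith
      refine ⟨1, ⟨le_rfl, hd⟩, ?_⟩
      rw [mem_sliceSimplex_iff n hn 1 le_rfl x]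
      refine ⟨fun j _ => h0 j, hs1, ?_, ?_⟩
      · rw [← hsdef]; norm_num; rw [hxl]
      · rw [← hsdef]; norm_num; rw [hxl, hseq]; norm_num
    · push_neg at hcase
      set r : ℝ := x L / (1 - s) with hr
      have hr0 : 0 ≤ r := div_nonneg hl0 hcase.le
      have hrd : r ≤ d := by
        rw [hr, div_le_iff₀ hcase]; linarith [hld]
      have hrx : r * (1 - s) = x L := by
        rw [hr]; field_simp
      refine ⟨max 1 ⌈r⌉₊, ⟨le_max_left _ _, max_le hd (Nat.ceil_le.mpr hrd)⟩, ?_⟩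
      rw [mem_sliceSimplex_iff n hn _ (le_max_left _ _) x]
      have hile : r ≤ (max 1 ⌈r⌉₊ : ℕ) := by
        calc r ≤ (⌈r⌉₊ : ℝ) := Nat.le_ceil r
        _ ≤ ((max 1 ⌈r⌉₊ : ℕ) : ℝ) := by exact_mod_cast Nat.le_max_right 1 ⌈r⌉₊
      have hige : ((max 1 ⌈r⌉₊ : ℕ) : ℝ) - 1 ≤ r := by
        by_cases hc : ⌈r⌉₊ ≤ 1
        · have : max 1 ⌈r⌉₊ = 1 := by omega
          rw [this]; simpa using hr0
        · have hm : max 1 ⌈r⌉₊ = ⌈r⌉₊ := by omega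
          rw [hm]
          have := Nat.ceil_lt_add_one hr0
          linarith
      refine ⟨fun j _ => h0 j, hs1, ?_, ?_⟩
      · rw [← hsdef, ← hrx]
        nlinarith
      · rw [← hsdef, ← hrx]
        nlinarith
  · rintro ⟨i, ⟨hi1, hid⟩, hx⟩
    rw [mem_sliceSimplex_iff n hn i hi1 x] at hx
    obtain ⟨h0, hs1, hlo, hhi⟩ := hx
    have hi1' : (1:ℝ) ≤ i := by exact_mod_cast hi1
    have hid' : (i:ℝ) ≤ d := by exact_mod_cast hid
    have hl0 : 0 ≤ x L := by nlinarith
    refine ⟨?_, ?_⟩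
    · intro j
      by_cases h : j = L
      · rw [h]; exact hl0
      · exact h0 j h
    · have hxd : x L ≤ d * (1 - rsum n hn x) := by nlinarith
      have : x L / d ≤ 1 - rsum n hn x := by
        rw [div_le_iff₀ hd0]; linarith [hxd]
      linarith
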